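/- arXiv:2507.02823 — 2 statements merged into one kernel-verified Lean document; each statement's English description precedes it below -/
import Mathlib

section
/- For the degree-d Veronese embedding of ℙ^1 with the Bombieri–Weyl metric, the k-th order distance degree equals k(d-k+1) for all 1 ≤ k ≤ d. Equivalently: the coefficient of h₁ h₂^{k-1} in the expansion of (-1)^k Σ_{j≥0} (-1)^j (d·h₁ + h₂ + k·h₁h₂)^j in ℤ[h₁,h₂]/⟨h₁², h₂^{d+1}⟩ equals k(d-k+1), for 1 ≤ k ≤ d. -/
open MvPolynomial Finset

private lemma pureCoeff (a b : ℤ) (j m : ℕ) :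
    coeff (Finsupp.single (1 : Fin 2) m)
      ((C a * X 0 + X 1 + C b * X 0 * X 1) ^ j : MvPolynomial (Fin 2) ℤ)
    = if m = j then 1 else 0 := by
  induction j generalizing m with
  | zero =>
    simp only [pow_zero]
    rw [coeff_one]
    by_cases hm : m = 0 <;> simp [hm, Finsupp.single_eq_zero, eq_comm]
  | succ j ih =>
    rw [pow_succ, mul_add, mul_add, coeff_add, coeff_add]
    have e1 : (C a * X 0 + X 1 + C b * X 0 * X 1 : MvPolynomial (Fin 2) ℤ) ^ j *
        (C a * X 0) = C a * ((C a * X 0 + X 1 + C b * X 0 * X 1) ^ j * X 0) := by ring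
    have e3 : (C a * X 0 + X 1 + C b * X 0 * X 1 : MvPolynomial (Fin 2) ℤ) ^ j *
        (C b * X 0 * X 1)
        = C b * (((C a * X 0 + X 1 + C b * X 0 * X 1) ^ j * X 0) * X 1) := by ring
    rw [e1, e3, coeff_C_mul, coeff_C_mul, coeff_mul_X', coeff_mul_X', coeff_mul_X']
    have h0 : (0 : Fin 2) ∉ (Finsupp.single (1 : Fin 2) m).support := by simp
    rw [if_neg h0]
    by_cases hm : m = 0
    · subst hm
      have h1 : (1 : Fin 2) ∉ (Finsupp.single (1 : Fin 2) 0).support := by simp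
      rw [if_neg h1, if_neg h1]
      simp
    · have h1 : (1 : Fin 2) ∈ (Finsupp.single (1 : Fin 2) m).support := by simp [hm]
      have e : Finsupp.single (1 : Fin 2) m - Finsupp.single 1 1 =
          Finsupp.single 1 (m - 1) := by ext i; fin_cases i <;> simp
      rw [if_pos h1, if_pos h1, e, ih, coeff_mul_X',
        if_neg (by simp : (0 : Fin 2) ∉ (Finsupp.single (1 : Fin 2) (m - 1)).support)]
      have : m - 1 = j ↔ m = j + 1 := by omega
      simp [this]

private lemma mixedCoeff (a b : ℤ) (j m : ℕ) :
    coeff (Finsupp.single (0 : Fin 2) 1 + Finsupp.single (1 : Fin 2) m)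
      ((C a * X 0 + X 1 + C b * X 0 * X 1) ^ j : MvPolynomial (Fin 2) ℤ)
    = if j = m + 1 then a * (m + 1) else if j = m then b * m else 0 := by
  induction j generalizing m with
  | zero =>
    simp only [pow_zero]
    rw [coeff_one]
    have hne : ¬ (0 : Fin 2 →₀ ℕ) = Finsupp.single (0 : Fin 2) 1 + Finsupp.single 1 m := by
      intro h
      have := DFunLike.congr_fun h (0 : Fin 2)
      simp at this
    rw [if_neg hne, if_neg (by omega : ¬ 0 = m + 1)]
    by_cases hm : m = 0
    · subst hm; simp
    · rw [if_neg (fun h => hm h.symm)]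
  | succ j ih =>
    rw [pow_succ, mul_add, mul_add, coeff_add, coeff_add]
    have e1 : (C a * X 0 + X 1 + C b * X 0 * X 1 : MvPolynomial (Fin 2) ℤ) ^ j *
        (C a * X 0) = C a * ((C a * X 0 + X 1 + C b * X 0 * X 1) ^ j * X 0) := by ring
    have e3 : (C a * X 0 + X 1 + C b * X 0 * X 1 : MvPolynomial (Fin 2) ℤ) ^ j *
        (C b * X 0 * X 1)
        = C b * (((C a * X 0 + X 1 + C b * X 0 * X 1) ^ j * X 0) * X 1) := by ring
    rw [e1, e3, coeff_C_mul, coeff_C_mul, coeff_mul_X', coeff_mul_X', coeff_mul_X']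
    have h0 : (0 : Fin 2) ∈
        (Finsupp.single (0 : Fin 2) 1 + Finsupp.single 1 m).support := by simp
    have e0 : (Finsupp.single (0 : Fin 2) 1 + Finsupp.single 1 m) - Finsupp.single 0 1 =
        Finsupp.single 1 m := by ext i; fin_cases i <;> simp
    rw [if_pos h0, e0, pureCoeff]
    by_cases hm : m = 0
    · subst hm
      have h1 : (1 : Fin 2) ∉
          (Finsupp.single (0 : Fin 2) 1 + Finsupp.single 1 0).support := by simp
      rw [if_neg h1, if_neg h1]
      split_ifs <;> first | (push_cast; ring1) | (exfalso; omega)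
    · have h1 : (1 : Fin 2) ∈
          (Finsupp.single (0 : Fin 2) 1 + Finsupp.single 1 m).support := by simp [hm]
      have e : (Finsupp.single (0 : Fin 2) 1 + Finsupp.single 1 m) - Finsupp.single 1 1 =
          Finsupp.single 0 1 + Finsupp.single 1 (m - 1) := by
        ext i; fin_cases i <;> simp
      have e' : (Finsupp.single (0 : Fin 2) 1 + Finsupp.single 1 (m - 1)) -
          Finsupp.single 0 1 = Finsupp.single 1 (m - 1) := by
        ext i; fin_cases i <;> simp
      have h0' : (0 : Fin 2) ∈
          (Finsupp.single (0 : Fin 2) 1 + Finsupp.single 1 (m - 1)).support := by simp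
      rw [if_pos h1, if_pos h1, e, ih, coeff_mul_X', if_pos h0', e', pureCoeff]
      obtain ⟨m', rfl⟩ : ∃ m', m = m' + 1 := ⟨m - 1, by omega⟩
      simp only [Nat.add_sub_cancel]
      split_ifs <;> first | (push_cast; ring1) | (exfalso; omega)

/-- For `1 ≤ k ≤ d`, the coefficient of `h₁ h₂^{k-1}` in the expansion of
`(-1)^k ∑_{j≥0} (-1)^j (d h₁ + h₂ + k h₁ h₂)^j` in `ℤ[h₁,h₂]/⟨h₁², h₂^{d+1}⟩`
equals `k(d-k+1)`. (The series is truncated at a bound beyond which no term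
contributes to this coefficient.) -/
theorem dd_k_veronese_P1_BW (d k : ℕ) (h1 : 1 ≤ k) (hk : k ≤ d) :
    (-1 : ℤ) ^ k *
      coeff (Finsupp.single (0 : Fin 2) 1 + Finsupp.single (1 : Fin 2) (k - 1))
        (∑ j ∈ range (d + k + 2),
          (-1 : MvPolynomial (Fin 2) ℤ) ^ j *
            (C (d : ℤ) * X 0 + X 1 + C (k : ℤ) * X 0 * X 1) ^ j)
      = (k : ℤ) * ((d : ℤ) - (k : ℤ) + 1) := by
  have key : ∀ j : ℕ,
      coeff (Finsupp.single (0 : Fin 2) 1 + Finsupp.single (1 : Fin 2) (k - 1))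
        ((-1 : MvPolynomial (Fin 2) ℤ) ^ j *
          (C (d : ℤ) * X 0 + X 1 + C (k : ℤ) * X 0 * X 1) ^ j)
      = (-1 : ℤ) ^ j *
          (if j = (k - 1) + 1 then (d : ℤ) * ((k - 1 : ℕ) + 1)
            else if j = k - 1 then (k : ℤ) * (k - 1 : ℕ) else 0) := by
    intro j
    have : ((-1 : MvPolynomial (Fin 2) ℤ) ^ j) = C ((-1 : ℤ) ^ j) := by
      rw [map_pow, map_neg, map_one]
    rw [this, coeff_C_mul, mixedCoeff]
  rw [coeff_sum]
  simp only [key]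
  have hks : k - 1 + 1 = k := by omega
  rw [Finset.sum_congr rfl (fun j _ => by rw [hks])]
  have split : ∀ j : ℕ, (-1 : ℤ) ^ j *
      (if j = k then (d : ℤ) * ((k - 1 : ℕ) + 1)
        else if j = k - 1 then (k : ℤ) * (k - 1 : ℕ) else 0)
      = (if j = k then (-1 : ℤ) ^ j * ((d : ℤ) * ((k - 1 : ℕ) + 1)) else 0)
        + (if j = k - 1 then (-1 : ℤ) ^ j * ((k : ℤ) * (k - 1 : ℕ)) else 0) := by
    intro j
    by_cases hj : j = k
    · rw [if_pos hj, if_pos hj, if_neg (by omega), add_zero]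
    · rw [if_neg hj, if_neg hj]
      by_cases hj' : j = k - 1
      · rw [if_pos hj', if_pos hj', zero_add]
      · rw [if_neg hj', if_neg hj', mul_zero, add_zero]
  rw [Finset.sum_congr rfl (fun j _ => split j), Finset.sum_add_distrib,
    Finset.sum_ite_eq' _ k, Finset.sum_ite_eq' _ (k - 1),
    if_pos (by simp only [Finset.mem_range]; omega : k ∈ range (d + k + 2)),
    if_pos (by simp only [Finset.mem_range]; omega : k - 1 ∈ range (d + k + 2))]
  have hc : ((k - 1 : ℕ) : ℤ) = (k : ℤ) - 1 := by
    push_cast [Nat.cast_sub h1]; ring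
  rw [hc]
  have hpow : (-1 : ℤ) ^ (k - 1) = -(-1 : ℤ) ^ k := by
    obtain ⟨k', rfl⟩ : ∃ k', k = k' + 1 := ⟨k - 1, by omega⟩
    simp [pow_succ]
  rw [hpow]
  have h2 : (-1 : ℤ) ^ k * (-1 : ℤ) ^ k = 1 := by
    rw [← pow_add, Even.neg_one_pow ⟨k, rfl⟩]
  ring_nf
  ring_nf at h2
  rw [h2]
  ring
end

section
/- For 1 ≤ k ≤ d, the coefficient of h₁² h₂^{S-3} (where S = binom(k+2,2)) in the expansion of (-1)^{S-1} Σ_{j≥0} (-1)^j (d h₁ + h₂ + k(d-k) h₁² + k h₁h₂)^j in ℤ[h₁,h₂]/⟨h₁³, h₂^{binom(d+2,2)}⟩ equals ((d-k)²/2)·S² − ((d-k)(3d-5k)/2)·S + (d-2k)². -/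
open MvPolynomial Finset

lemma aux_single_eq (p q p' q' : ℕ) :
    (Finsupp.single (0:Fin 2) p + Finsupp.single (1:Fin 2) q)
      = Finsupp.single (0:Fin 2) p' + Finsupp.single (1:Fin 2) q' ↔ p = p' ∧ q = q' := by
  constructor
  · intro h
    constructor
    · have := DFunLike.congr_fun h (0 : Fin 2)
      simpa [Finsupp.single_apply] using this
    · have := DFunLike.congr_fun h (1 : Fin 2)
      simpa [Finsupp.single_apply] using this
  · rintro ⟨rfl, rfl⟩; rfl

lemma aux_degree_single (i : Fin 2) (n : ℕ) : Finsupp.degree (Finsupp.single i n) = n := by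
  rcases n with _ | n
  · simp
  · rw [Finsupp.degree_apply, Finsupp.support_single_ne_zero _ (Nat.succ_ne_zero n)]
    simp

lemma aux_degree_add (a b : Fin 2 →₀ ℕ) :
    Finsupp.degree (a + b) = Finsupp.degree a + Finsupp.degree b := by
  simp [Finsupp.degree_eq_weight_one, map_add]

lemma aux_lowdeg (f g : MvPolynomial (Fin 2) ℤ) (hf : constantCoeff f = 0) :
    ∀ (n : ℕ) (m : Fin 2 →₀ ℕ), Finsupp.degree m < n → coeff m (f ^ n * g) = 0 := by
  intro n
  induction n with
  | zero => intro m h; omega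
  | succ n ih =>
    intro m h
    have hh : f ^ (n+1) * g = f * (f ^ n * g) := by ring
    rw [hh, coeff_mul]
    apply Finset.sum_eq_zero
    intro x hx
    rw [Finset.HasAntidiagonal.mem_antidiagonal] at hx
    by_cases h1 : x.1 = 0
    · have : coeff x.1 f = 0 := by rw [h1]; exact hf
      rw [this, zero_mul]
    · have hs : 1 ≤ Finsupp.degree x.1 := by
        rcases Nat.eq_zero_or_pos (Finsupp.degree x.1) with h0 | h0
        · exact absurd ((Finsupp.degree_eq_zero_iff _).mp h0) h1
        · exact h0
      have hdeg : Finsupp.degree x.2 < n := by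
        have := aux_degree_add x.1 x.2
        rw [hx] at this
        omega
      rw [ih x.2 hdeg, mul_zero]

lemma aux_Xpow_mul_zero (i : Fin 2) (n : ℕ) (m : Fin 2 →₀ ℕ) (g : MvPolynomial (Fin 2) ℤ)
    (h : m i < n) : coeff m (X i ^ n * g) = 0 := by
  rw [X_pow_eq_monomial, coeff_monomial_mul']
  rw [if_neg]
  intro hle
  have := hle i
  simp [Finsupp.single_apply] at this
  omega

lemma aux_coeff_W_pow (b : ℤ) (p q j : ℕ) :
    coeff (Finsupp.single (0:Fin 2) p + Finsupp.single (1:Fin 2) q)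
      ((C b * X 0 + X 1) ^ j) = if p + q = j then (j.choose p : ℤ) * b ^ p else 0 := by
  rw [add_pow, coeff_sum]
  have hterm : ∀ t ∈ range (j+1),
      coeff (Finsupp.single (0:Fin 2) p + Finsupp.single (1:Fin 2) q)
        ((C b * X 0) ^ t * X 1 ^ (j - t) * (j.choose t : MvPolynomial (Fin 2) ℤ))
      = if t = p then (if p + q = j then (j.choose p : ℤ) * b ^ p else 0) else 0 := by
    intro t ht
    rw [mem_range] at ht
    have e1 : ((j.choose t : ℕ) : MvPolynomial (Fin 2) ℤ) = C ((j.choose t : ℕ) : ℤ) := by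
      simp
    have e2 : (C b * X (0 : Fin 2)) ^ t * X 1 ^ (j-t) * C ((j.choose t:ℕ):ℤ)
        = C ((j.choose t : ℤ) * b ^ t) * (X 0 ^ t * X 1 ^ (j-t)) := by
      rw [map_mul, C_pow]; ring
    rw [e1, e2, coeff_C_mul, X_pow_eq_monomial, X_pow_eq_monomial, monomial_mul, mul_one,
      coeff_monomial]
    simp only [aux_single_eq]
    split_ifs with h1 h2 h3 h4 h5
    · obtain ⟨rfl, -⟩ := h1; rw [mul_one]
    · obtain ⟨rfl, h⟩ := h1; omega
    · exact absurd h1.1 h2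
    · exact absurd ⟨h4, by omega⟩ h1
    · exact mul_zero _
    · exact mul_zero _
  rw [Finset.sum_congr rfl hterm, Finset.sum_ite_eq' (range (j+1)) p]
  by_cases hj : p + q = j
  · rw [if_pos (by rw [mem_range]; omega)]
  · simp [hj]

lemma aux_coeff_Q2 (b : ℤ) (p q S : ℕ) (h : p + q < S) :
    coeff (Finsupp.single (0:Fin 2) p + Finsupp.single (1:Fin 2) q)
      (∑ j ∈ range S, (-(C b * X (0:Fin 2) + X 1))^j)
      = (-1)^(p+q) * (((p+q).choose p : ℕ) : ℤ) * b^p := by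
  rw [coeff_sum]
  have hterm : ∀ j ∈ range S,
      coeff (Finsupp.single (0:Fin 2) p + Finsupp.single (1:Fin 2) q)
        ((-(C b * X (0:Fin 2) + X 1))^j)
      = if j = p + q then (-1)^(p+q) * (((p+q).choose p : ℕ) : ℤ) * b^p else 0 := by
    intro j hj
    have e1 : (-(C b * X (0:Fin 2) + X 1))^j
        = C ((-1:ℤ)^j) * (C b * X (0:Fin 2) + X 1)^j := by
      rw [neg_pow, map_pow, map_neg, map_one]
    rw [e1, coeff_C_mul, aux_coeff_W_pow]
    split_ifs with h1 h2 h3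
    · rw [← h2]; ring
    · omega
    · omega
    · exact mul_zero _
  rw [Finset.sum_congr rfl hterm, Finset.sum_ite_eq' (range S) (p+q)]
  rw [if_pos (by rw [mem_range]; omega)]

/-- For `1 ≤ k ≤ d` and `S = binom(k+2,2)`, the coefficient of `h₁² h₂^{S-3}` in the
expansion of `(-1)^{S-1} ∑_{j≥0} (-1)^j (d h₁ + h₂ + k(d-k) h₁² + k h₁h₂)^j`
in `ℤ[h₁,h₂]/⟨h₁³, h₂^{binom(d+2,2)}⟩` equals
`((d-k)²/2) S² − ((d-k)(3d-5k)/2) S + (d-2k)²`. -/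
theorem dd_k_veronese_P2_BW (d k : ℕ) (h1 : 1 ≤ k) (hk : k ≤ d) :
    (((-1 : ℤ) ^ (Nat.choose (k + 2) 2 - 1) *
      coeff (Finsupp.single (0 : Fin 2) 2 +
          Finsupp.single (1 : Fin 2) (Nat.choose (k + 2) 2 - 3))
        (∑ j ∈ range (Nat.choose (k + 2) 2 + Nat.choose (d + 2) 2),
          (-1 : MvPolynomial (Fin 2) ℤ) ^ j *
            (C (d : ℤ) * X 0 + X 1 + C ((k : ℤ) * ((d : ℤ) - (k : ℤ))) * X 0 ^ 2 +
              C (k : ℤ) * X 0 * X 1) ^ j) : ℤ) : ℚ)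
      = ((d : ℚ) - k) ^ 2 / 2 * (Nat.choose (k + 2) 2 : ℚ) ^ 2
        - ((d : ℚ) - k) * (3 * (d : ℚ) - 5 * k) / 2 * (Nat.choose (k + 2) 2 : ℚ)
        + ((d : ℚ) - 2 * k) ^ 2 := by
  have hS3 : 3 ≤ Nat.choose (k + 2) 2 := by
    calc 3 = Nat.choose 3 2 := by decide
    _ ≤ Nat.choose (k + 2) 2 := Nat.choose_le_choose 2 (by omega)
  obtain ⟨q, hq⟩ : ∃ q, Nat.choose (k + 2) 2 = q + 3 := ⟨Nat.choose (k + 2) 2 - 3, by omega⟩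
  have hM : 1 ≤ Nat.choose (d + 2) 2 := Nat.choose_pos (by omega)
  set M := Nat.choose (d + 2) 2 with hMdef
  rw [hq]
  have e31 : q + 3 - 1 = q + 2 := by omega
  have e33 : q + 3 - 3 = q := by omega
  rw [e31, e33]
  set a : ℤ := (k : ℤ) with ha
  set b : ℤ := (d : ℤ) - (k : ℤ) with hb
  set P : MvPolynomial (Fin 2) ℤ :=
    C (d : ℤ) * X 0 + X 1 + C ((k : ℤ) * ((d : ℤ) - (k : ℤ))) * X 0 ^ 2 +
      C (k : ℤ) * X 0 * X 1 with hP
  set N : ℕ := q + 3 + M with hN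
  set W : MvPolynomial (Fin 2) ℤ := C b * X 0 + X 1 with hW
  set F1 : MvPolynomial (Fin 2) ℤ := 1 + C a * X 0 with hF1
  set F2 : MvPolynomial (Fin 2) ℤ := 1 + W with hF2
  set Q1 : MvPolynomial (Fin 2) ℤ := ∑ i ∈ range 3, (-(C a * X 0))^i with hQ1def
  set Q2 : MvPolynomial (Fin 2) ℤ := ∑ j ∈ range (q + 3), (-W)^j with hQ2def
  set G : MvPolynomial (Fin 2) ℤ := ∑ j ∈ range N, (-P)^j with hGdef
  set m : Fin 2 →₀ ℕ := Finsupp.single (0 : Fin 2) 2 + Finsupp.single (1 : Fin 2) q with hm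
  have hGstmt : (∑ j ∈ range N, (-1 : MvPolynomial (Fin 2) ℤ) ^ j * P ^ j) = G := by
    refine Finset.sum_congr rfl fun j _ => (neg_pow P j).symm
  rw [hGstmt]
  -- algebraic identities
  have hgeom : G * (-P - 1) = (-P)^N - 1 := geom_sum_mul (-P) N
  have hQ1g : Q1 * (-(C a * X 0) - 1) = (-(C a * X 0))^3 - 1 := geom_sum_mul _ 3
  have hQ2g : Q2 * (-W - 1) = (-W)^(q+3) - 1 := geom_sum_mul _ (q+3)
  have hfact : (1 : MvPolynomial (Fin 2) ℤ) + P = F1 * F2 := by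
    have e : (C ((d : ℤ)) : MvPolynomial (Fin 2) ℤ) = C a + C b := by rw [← map_add]; congr 1; rw [ha, hb]; ring
    have e2 : (C ((k : ℤ) * ((d : ℤ) - (k : ℤ))) : MvPolynomial (Fin 2) ℤ) = C a * C b := by
      rw [← map_mul]
    rw [hP, hF1, hF2, hW, e, e2]; ring
  have hA : F1 * Q1 = 1 + (C a * X 0)^3 := by linear_combination -hQ1g
  have hB : F2 * Q2 = 1 - (-W)^(q+3) := by linear_combination -hQ2g
  have hC : F1 * F2 * G = 1 - (-P)^N := by linear_combination -hgeom - G * hfact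
  have key : G = Q1*Q2 - (-P)^N * (Q1*Q2) + (G*F1*Q1)*((-W)^(q+3)) - G*(C a * X 0)^3 := by
    linear_combination (Q1*Q2) * hC - (F1*Q1*G) * hB - G * hA
  have hdegm : Finsupp.degree m = 2 + q := by
    rw [hm, aux_degree_add, aux_degree_single, aux_degree_single]
  have hccP : constantCoeff (-P) = 0 := by
    rw [map_neg, hP]
    simp
  have hccW : constantCoeff (-W) = 0 := by
    rw [map_neg, hW]
    simp
  have v1 : coeff m ((-P)^N * (Q1*Q2)) = 0 :=
    aux_lowdeg (-P) (Q1*Q2) hccP N m (by rw [hdegm]; omega)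
  have v2 : coeff m ((G*F1*Q1)*((-W)^(q+3))) = 0 := by
    rw [mul_comm]
    exact aux_lowdeg (-W) (G*F1*Q1) hccW (q+3) m (by rw [hdegm]; omega)
  have v3 : coeff m (G*(C a * X 0)^3) = 0 := by
    have e : G*(C a * X 0)^3 = X 0 ^ 3 * (C (a^3) * G) := by
      rw [C_pow]; ring
    rw [e]
    refine aux_Xpow_mul_zero 0 3 m _ ?_
    rw [hm]
    simp [Finsupp.single_apply]
  -- coefficient of Q1*Q2
  have hQ1e : Q1 = 1 - C a * X 0 + C (a^2) * X 0 ^ 2 := by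
    rw [hQ1def, Finset.sum_range_succ, Finset.sum_range_succ, Finset.sum_range_one, C_pow]
    ring
  have hsplit : Q1 * Q2 = Q2 - C a * (X 0 ^ 1 * Q2) + C (a^2) * (X 0 ^ 2 * Q2) := by
    rw [hQ1e]; ring
  have c2 : coeff m Q2 = (-1)^(2+q) * (((2+q).choose 2 : ℕ) : ℤ) * b^2 := by
    rw [hm, hQ2def, hW]
    exact aux_coeff_Q2 b 2 q (q+3) (by omega)
  have c1 : coeff m (X 0 ^ 1 * Q2) = (-1)^(1+q) * (((1+q).choose 1 : ℕ) : ℤ) * b^1 := by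
    have em : m = Finsupp.single (0 : Fin 2) 1 +
        (Finsupp.single (0 : Fin 2) 1 + Finsupp.single (1 : Fin 2) q) := by
      rw [hm, ← add_assoc, ← Finsupp.single_add]
    rw [em, X_pow_eq_monomial, coeff_monomial_mul, one_mul, hQ2def, hW]
    exact aux_coeff_Q2 b 1 q (q+3) (by omega)
  have c0 : coeff m (X 0 ^ 2 * Q2) = (-1)^(0+q) * (((0+q).choose 0 : ℕ) : ℤ) * b^0 := by
    have em : m = Finsupp.single (0 : Fin 2) 2 +
        (Finsupp.single (0 : Fin 2) 0 + Finsupp.single (1 : Fin 2) q) := by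
      rw [hm, Finsupp.single_zero, zero_add]
    rw [em, X_pow_eq_monomial, coeff_monomial_mul, one_mul, hQ2def, hW]
    exact aux_coeff_Q2 b 0 q (q+3) (by omega)
  have hcoeff : coeff m G =
      (-1)^q * ((((2+q).choose 2 : ℕ) : ℤ) * b^2 + a * (q+1 : ℕ) * b + a^2) := by
    rw [key, coeff_sub, coeff_add, coeff_sub, v1, v2, v3, hsplit, coeff_add, coeff_sub,
      coeff_C_mul, coeff_C_mul, c2, c1, c0]
    have h21 : ((1+q).choose 1 : ℕ) = q + 1 := by rw [Nat.choose_one_right]; omega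
    rw [h21, Nat.choose_zero_right]
    have r2 : (-1:ℤ)^(2+q) = (-1:ℤ)^q := by rw [pow_add]; ring
    have r1 : (-1:ℤ)^(1+q) = -(-1:ℤ)^q := by rw [pow_add]; ring
    have r0 : (-1:ℤ)^(0+q) = (-1:ℤ)^q := by norm_num
    rw [r2, r1, r0]
    push_cast
    ring
  rw [hcoeff]
  have hsign : (-1 : ℤ)^(q+2) * ((-1)^q *
      ((((2+q).choose 2 : ℕ) : ℤ) * b^2 + a * (q+1 : ℕ) * b + a^2))
      = (((2+q).choose 2 : ℕ) : ℤ) * b^2 + a * (q+1 : ℕ) * b + a^2 := by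
    rw [← mul_assoc, ← pow_add]
    have : Even (q + 2 + q) := ⟨q + 1, by ring⟩
    rw [this.neg_one_pow, one_mul]
  rw [hsign]
  have hch : (((2+q).choose 2 : ℕ) : ℚ) = (2+q : ℚ) * (1+q : ℚ) / 2 := by
    rw [Nat.cast_choose_two]
    push_cast
    ring
  push_cast [hch, ha, hb]
  ring
end
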